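/- Let G be an infinite, locally finite, strongly connected, quasi-transitive directed graph. Then μ^B = μ^{FB}, where μ^B and μ^{FB} are the exponential growth rates of the numbers of backward extendable and doubly extendable n-step SAWs, respectively. -/

import Mathlib

open Filter ENNReal

structure Dgraph where
  V : Type
  E : Type
  src : E → V
  tgt : E → V

namespace Dgraph

variable (G : Dgraph)

/-- Every vertex has finite in-degree and out-degree. -/
def LocallyFinite : Prop :=
  ∀ v : G.V, {e : G.E | G.src e = v}.Finite ∧ {e : G.E | G.tgt e = v}.Finite

/-- There is a directed edge from `u` to `v`. -/
def Adj (u v : G.V) : Prop := ∃ e : G.E, G.src e = u ∧ G.tgt e = v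

/-- Directed walks exist between any ordered pair of vertices. -/
def StronglyConnected : Prop := ∀ u v : G.V, Relation.ReflTransGen G.Adj u v

/-- An automorphism of a directed multigraph. -/
structure Aut where
  vmap : G.V ≃ G.V
  emap : G.E ≃ G.E
  src_eq : ∀ e, G.src (emap e) = vmap (G.src e)
  tgt_eq : ∀ e, G.tgt (emap e) = vmap (G.tgt e)

/-- `u` and `v` are in the same transitivity class. -/
def SameOrbit (u v : G.V) : Prop := ∃ φ : G.Aut, φ.vmap u = v

/-- Finitely many transitivity classes. -/
def QuasiTransitive : Prop := ∃ S : Finset G.V, ∀ v : G.V, ∃ s ∈ S, G.SameOrbit s v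

def VertexTransitive : Prop := ∀ u v : G.V, G.SameOrbit u v

/-- The orbit of `v` under the stabiliser of `u`. -/
def stabOrbit (u v : G.V) : Set G.V := {w | ∃ φ : G.Aut, φ.vmap u = u ∧ φ.vmap v = w}

/-- Unimodularity: the weight function is constant on transitivity classes,
equivalently `|stab(u)v| = |stab(v)u|` whenever `u, v` are in the same orbit. -/
def Unimodular : Prop := ∀ u v : G.V, G.SameOrbit u v →
  Nat.card (G.stabOrbit u v) = Nat.card (G.stabOrbit v u)

/-- The edge-reversal of `G`. -/
def rev : Dgraph := ⟨G.V, G.E, G.tgt, G.src⟩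

/-- Each edge has a reverse edge: `G` represents an undirected graph. -/
def Undirected : Prop := ∃ ι : G.E ≃ G.E, ∀ e : G.E,
  G.src (ι e) = G.tgt e ∧ G.tgt (ι e) = G.src e ∧ ι (ι e) = e

/-- An `n`-step self-avoiding walk starting at `v`, directed away from `v`. -/
@[ext]
structure SAW (n : ℕ) (v : G.V) where
  vs : Fin (n + 1) → G.V
  es : Fin n → G.E
  hsrc : ∀ i : Fin n, G.src (es i) = vs i.castSucc
  htgt : ∀ i : Fin n, G.tgt (es i) = vs i.succ
  hstart : vs 0 = v
  hinj : Function.Injective vs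

/-- `w` is an initial segment of a singly infinite SAW from `v`. -/
def IsFwdExt {n : ℕ} {v : G.V} (w : G.SAW n v) : Prop :=
  ∃ (vs : ℕ → G.V) (es : ℕ → G.E), Function.Injective vs ∧
    (∀ i : ℕ, G.src (es i) = vs i ∧ G.tgt (es i) = vs (i + 1)) ∧
    (∀ i : Fin (n + 1), vs i = w.vs i) ∧ (∀ i : Fin n, es i = w.es i)

/-- `w` is the final segment of a singly infinite SAW from infinity ending at the
endpoint of `w` (indexed backwards from the endpoint). -/
def IsBwdExt {n : ℕ} {v : G.V} (w : G.SAW n v) : Prop :=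
  ∃ (vs : ℕ → G.V) (es : ℕ → G.E), Function.Injective vs ∧
    (∀ i : ℕ, G.src (es i) = vs (i + 1) ∧ G.tgt (es i) = vs i) ∧
    (∀ i : Fin (n + 1), vs (n - (i : ℕ)) = w.vs i) ∧
    (∀ i : Fin n, es (n - 1 - (i : ℕ)) = w.es i)

/-- `w` is a sub-walk of a doubly infinite SAW. -/
def IsDblExt {n : ℕ} {v : G.V} (w : G.SAW n v) : Prop :=
  ∃ (vs : ℤ → G.V) (es : ℤ → G.E), Function.Injective vs ∧
    (∀ i : ℤ, G.src (es i) = vs i ∧ G.tgt (es i) = vs (i + 1)) ∧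
    ∃ k : ℤ, (∀ i : Fin (n + 1), vs (k + (i : ℕ)) = w.vs i) ∧
      (∀ i : Fin n, es (k + (i : ℕ)) = w.es i)

noncomputable def sigma (n : ℕ) (v : G.V) : ℕ := Nat.card (G.SAW n v)
noncomputable def sigmaF (n : ℕ) (v : G.V) : ℕ := Nat.card {w : G.SAW n v // G.IsFwdExt w}
noncomputable def sigmaB (n : ℕ) (v : G.V) : ℕ := Nat.card {w : G.SAW n v // G.IsBwdExt w}
noncomputable def sigmaFB (n : ℕ) (v : G.V) : ℕ := Nat.card {w : G.SAW n v // G.IsDblExt w}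

noncomputable def ssigma (n : ℕ) : ℝ≥0∞ := ⨆ v : G.V, (G.sigma n v : ℝ≥0∞)
noncomputable def ssigmaF (n : ℕ) : ℝ≥0∞ := ⨆ v : G.V, (G.sigmaF n v : ℝ≥0∞)
noncomputable def ssigmaB (n : ℕ) : ℝ≥0∞ := ⨆ v : G.V, (G.sigmaB n v : ℝ≥0∞)
noncomputable def ssigmaFB (n : ℕ) : ℝ≥0∞ := ⨆ v : G.V, (G.sigmaFB n v : ℝ≥0∞)

/-- Undirected graph distance: length of a shortest path ignoring orientations. -/
noncomputable def udist (u v : G.V) : ℕ :=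
  sInf {n : ℕ | ∃ f : Fin (n + 1) → G.V, f 0 = u ∧ f (Fin.last n) = v ∧
    ∀ i : Fin n, (∃ e, G.src e = f i.castSucc ∧ G.tgt e = f i.succ) ∨
      (∃ e, G.src e = f i.succ ∧ G.tgt e = f i.castSucc)}

end Dgraph

open Filter ENNReal

attribute [local instance] Classical.propDecidable


open Filter ENNReal

namespace Dgraph

variable {G : Dgraph}

theorem vs_congr {n : ℕ} {v : G.V} (w : G.SAW n v) {i j : Fin (n+1)} (h : i.1 = j.1) :
    w.vs i = w.vs j := by congr 1; exact Fin.ext h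

theorem es_congr {n : ℕ} {v : G.V} (w : G.SAW n v) {i j : Fin n} (h : i.1 = j.1) :
    w.es i = w.es j := by congr 1; exact Fin.ext h

/-- Truncation of a SAW to its first `n` steps. -/
def take {N : ℕ} {v : G.V} (n : ℕ) (h : n ≤ N) (w : G.SAW N v) : G.SAW n v where
  vs i := w.vs ⟨i.1, by omega⟩
  es i := w.es ⟨i.1, by omega⟩
  hsrc i := (w.hsrc ⟨i.1, by omega⟩).trans (vs_congr w (by simp))
  htgt i := (w.htgt ⟨i.1, by omega⟩).trans (vs_congr w (by simp))
  hstart := (vs_congr w (by simp)).trans w.hstart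
  hinj i j hij := Fin.ext (by simpa using congrArg Fin.val (w.hinj hij))

/-- The final `m` steps of a SAW of length `n + m`. -/
def drop {N : ℕ} {v : G.V} (n m : ℕ) (h : n + m = N) (w : G.SAW N v) :
    G.SAW m (w.vs ⟨n, by omega⟩) where
  vs i := w.vs ⟨n + i.1, by omega⟩
  es i := w.es ⟨n + i.1, by omega⟩
  hsrc i := (w.hsrc ⟨n + i.1, by omega⟩).trans (vs_congr w (by simp))
  htgt i := (w.htgt ⟨n + i.1, by omega⟩).trans (vs_congr w (by simp [Nat.add_assoc]))
  hstart := vs_congr w (by simp)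
  hinj i j hij := Fin.ext (by have := congrArg Fin.val (w.hinj hij); simp at this; omega)

theorem take_vs {N n : ℕ} {v : G.V} (h : n ≤ N) (w : G.SAW N v) (i : Fin (n+1)) :
    (take n h w).vs i = w.vs ⟨i.1, by omega⟩ := rfl

theorem take_es {N n : ℕ} {v : G.V} (h : n ≤ N) (w : G.SAW N v) (i : Fin n) :
    (take n h w).es i = w.es ⟨i.1, by omega⟩ := rfl

theorem take_take {N n k : ℕ} {v : G.V} (h1 : n ≤ k) (h2 : k ≤ N) (w : G.SAW N v) :
    take n h1 (take k h2 w) = take n (h1.trans h2) w := by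
  ext i <;> rfl

theorem sawFinite (hlf : G.LocallyFinite) : ∀ (n : ℕ) (v : G.V), Finite (G.SAW n v) := by
  intro n
  induction n with
  | zero =>
    intro v
    have : Subsingleton (G.SAW 0 v) := by
      constructor
      intro w w'
      ext i
      · have h0 : i = 0 := Fin.ext (by omega)
        rw [h0, w.hstart, w'.hstart]
      · exact i.elim0
    infer_instance
  | succ n ih =>
    intro v
    haveI := ih v
    haveI : ∀ w : G.SAW n v, Finite {e : G.E // G.src e = w.vs (Fin.last n)} := by
      intro w
      exact ((hlf (w.vs (Fin.last n))).1).to_subtype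
    set f : G.SAW (n+1) v → Σ w : G.SAW n v, {e : G.E // G.src e = w.vs (Fin.last n)} :=
      fun w => ⟨take n (by omega) w, ⟨w.es (Fin.last n),
        (w.hsrc (Fin.last n)).trans (vs_congr w (by simp))⟩⟩ with hf
    apply Finite.of_injective f
    intro w w' he
    have h1 : take n (by omega) w = take n (by omega) w' := congrArg Sigma.fst he
    have h2 : w.es (Fin.last n) = w'.es (Fin.last n) := by
      have h2' := (Sigma.mk.inj_iff.1 he).2
      exact (Subtype.heq_iff_coe_eq (fun x => by rw [h1])).1 h2'
    have hvs : ∀ i : Fin (n+1+1), w.vs i = w'.vs i := by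
      intro i
      by_cases hi : i.1 ≤ n
      · have := congrArg (fun u => u.vs ⟨i.1, by omega⟩) h1
        simpa [take_vs] using (vs_congr w (j := i) rfl) ▸ this
      · have hin : i.1 = n + 1 := by omega
        have e1 := w.htgt (Fin.last n)
        have e2 := w'.htgt (Fin.last n)
        rw [h2] at e1
        rw [e1] at e2
        calc w.vs i = w.vs (Fin.last n).succ := vs_congr w (by simp [hin])
          _ = w'.vs (Fin.last n).succ := e2
          _ = w'.vs i := vs_congr w' (by simp [hin])
    have hes : ∀ i : Fin (n+1), w.es i = w'.es i := by
      intro i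
      by_cases hi : i.1 < n
      · have := congrArg (fun u => u.es ⟨i.1, hi⟩) h1
        simp only [take_es] at this
        calc w.es i = w.es ⟨i.1, by omega⟩ := es_congr w rfl
          _ = w'.es ⟨i.1, by omega⟩ := this
          _ = w'.es i := es_congr w' rfl
      · have hin : i.1 = n := by omega
        calc w.es i = w.es (Fin.last n) := es_congr w (by simp [hin])
          _ = w'.es (Fin.last n) := h2
          _ = w'.es i := es_congr w' (by simp [hin])
    ext i
    · exact hvs i
    · exact hes i

end Dgraph

namespace Dgraph

variable {G : Dgraph}

theorem rev_locallyFinite (hlf : G.LocallyFinite) : G.rev.LocallyFinite :=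
  fun v => ⟨(hlf v).2, (hlf v).1⟩

theorem isBwdExt_take {N n : ℕ} {v : G.V} (h : n ≤ N) {w : G.SAW N v}
    (hw : G.IsBwdExt w) : G.IsBwdExt (take n h w) := by
  obtain ⟨vs, es, hinj, hedge, hvs, hes⟩ := hw
  refine ⟨fun j => vs (j + (N - n)), fun j => es (j + (N - n)), ?_, ?_, ?_, ?_⟩
  · intro a b hab
    have := hinj hab
    omega
  · intro i
    refine ⟨(hedge (i + (N - n))).1.trans ?_, (hedge (i + (N - n))).2⟩
    congr 1
    omega
  · intro i
    have hi := i.isLt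
    have h2 := hvs ⟨i.1, by omega⟩
    simp only [Fin.val_mk] at h2
    rw [take_vs, ← h2]
    show vs (n - i.1 + (N - n)) = vs (N - i.1)
    congr 1
    omega
  · intro i
    have hi := i.isLt
    have h2 := hes ⟨i.1, by omega⟩
    simp only [Fin.val_mk] at h2
    rw [take_es, ← h2]
    show es (n - 1 - i.1 + (N - n)) = es (N - 1 - i.1)
    congr 1
    omega

theorem isBwdExt_drop {N n m : ℕ} {v : G.V} (h : n + m = N) {w : G.SAW N v}
    (hw : G.IsBwdExt w) : G.IsBwdExt (drop n m h w) := by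
  obtain ⟨vs, es, hinj, hedge, hvs, hes⟩ := hw
  refine ⟨vs, es, hinj, hedge, ?_, ?_⟩
  · intro i
    have hi := i.isLt
    have h2 := hvs ⟨n + i.1, by omega⟩
    simp only [Fin.val_mk] at h2
    show vs (m - i.1) = w.vs ⟨n + i.1, by omega⟩
    rw [← h2]
    congr 1
    omega
  · intro i
    have hi := i.isLt
    have h2 := hes ⟨n + i.1, by omega⟩
    simp only [Fin.val_mk] at h2
    show es (m - 1 - i.1) = w.es ⟨n + i.1, by omega⟩
    rw [← h2]
    congr 1
    omega

theorem isDblExt_take {N n : ℕ} {v : G.V} (h : n ≤ N) {w : G.SAW N v}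
    (hw : G.IsDblExt w) : G.IsDblExt (take n h w) := by
  obtain ⟨vs, es, hinj, hedge, k, hvs, hes⟩ := hw
  exact ⟨vs, es, hinj, hedge, k, fun i => hvs ⟨i.1, by omega⟩, fun i => hes ⟨i.1, by omega⟩⟩

theorem isDblExt_drop {N n m : ℕ} {v : G.V} (h : n + m = N) {w : G.SAW N v}
    (hw : G.IsDblExt w) : G.IsDblExt (drop n m h w) := by
  obtain ⟨vs, es, hinj, hedge, k, hvs, hes⟩ := hw
  refine ⟨vs, es, hinj, hedge, k + n, ?_, ?_⟩
  · intro i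
    have := hvs ⟨n + i.1, by omega⟩
    show vs (k + n + i.1) = w.vs ⟨n + i.1, by omega⟩
    convert this using 2
    push_cast
    ring
  · intro i
    have := hes ⟨n + i.1, by omega⟩
    show es (k + n + i.1) = w.es ⟨n + i.1, by omega⟩
    convert this using 2
    push_cast
    ring

theorem isBwdExt_of_isDblExt {n : ℕ} {v : G.V} {w : G.SAW n v}
    (hw : G.IsDblExt w) : G.IsBwdExt w := by
  obtain ⟨vs, es, hinj, hedge, k, hvs, hes⟩ := hw
  refine ⟨fun j => vs (k + n - j), fun j => es (k + n - 1 - j), ?_, ?_, ?_, ?_⟩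
  · intro a b hab
    have := hinj hab
    omega
  · intro i
    constructor
    · refine ((hedge (k + n - 1 - i)).1).trans ?_
      congr 1
      push_cast
      ring
    · refine ((hedge (k + n - 1 - i)).2).trans ?_
      congr 1
      ring
  · intro i
    have hi := i.isLt
    rw [← hvs i]
    congr 1
    push_cast [Nat.cast_sub (by omega : i.1 ≤ n)]
    ring
  · intro i
    have hi := i.isLt
    rw [← hes i]
    congr 1
    push_cast [Nat.cast_sub (by omega : i.1 ≤ n - 1)]
    push_cast [Nat.cast_sub (by omega : 1 ≤ n)]
    ring

end Dgraph

namespace Dgraph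

variable {G : Dgraph}

/-- The inverse of an automorphism. -/
def Aut.inv (φ : G.Aut) : G.Aut where
  vmap := φ.vmap.symm
  emap := φ.emap.symm
  src_eq e := by
    apply φ.vmap.injective
    rw [← φ.src_eq, Equiv.apply_symm_apply, Equiv.apply_symm_apply]
  tgt_eq e := by
    apply φ.vmap.injective
    rw [← φ.tgt_eq, Equiv.apply_symm_apply, Equiv.apply_symm_apply]

theorem Aut.inv_vmap (φ : G.Aut) {v v' : G.V} (hv : φ.vmap v = v') : φ.inv.vmap v' = v := by
  simp [Aut.inv, ← hv]

/-- Transport of a SAW along an automorphism. -/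
def Aut.saw (φ : G.Aut) {n : ℕ} {v v' : G.V} (hv : φ.vmap v = v') (w : G.SAW n v) :
    G.SAW n v' where
  vs i := φ.vmap (w.vs i)
  es i := φ.emap (w.es i)
  hsrc i := by rw [φ.src_eq, w.hsrc]
  htgt i := by rw [φ.tgt_eq, w.htgt]
  hstart := by show φ.vmap (w.vs 0) = v'; rw [w.hstart, hv]
  hinj i j h := w.hinj (φ.vmap.injective h)

theorem Aut.saw_injective (φ : G.Aut) {n : ℕ} {v v' : G.V} (hv : φ.vmap v = v')
    {w w' : G.SAW n v} (h : φ.saw hv w = φ.saw hv w') : w = w' := by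
  ext i
  · exact φ.vmap.injective (congrArg (fun u => u.vs i) h)
  · exact φ.emap.injective (congrArg (fun u => u.es i) h)

theorem Aut.saw_saw_inv (φ : G.Aut) {n : ℕ} {v v' : G.V} (hv : φ.vmap v = v')
    (hv' : φ.inv.vmap v' = v) (w : G.SAW n v') :
    φ.saw hv (φ.inv.saw hv' w) = w := by
  ext i
  · exact φ.vmap.apply_symm_apply _
  · exact φ.emap.apply_symm_apply _

theorem take_saw (φ : G.Aut) {N n : ℕ} {v v' : G.V} (hv : φ.vmap v = v') (h : n ≤ N)
    (w : G.SAW N v) : take n h (φ.saw hv w) = φ.saw hv (take n h w) := by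
  ext i <;> rfl

theorem isBwdExt_saw (φ : G.Aut) {n : ℕ} {v v' : G.V} (hv : φ.vmap v = v')
    {w : G.SAW n v} (hw : G.IsBwdExt w) : G.IsBwdExt (φ.saw hv w) := by
  obtain ⟨vs, es, hinj, hedge, hvs, hes⟩ := hw
  refine ⟨fun j => φ.vmap (vs j), fun j => φ.emap (es j),
    fun a b hab => hinj (φ.vmap.injective hab), ?_, ?_, ?_⟩
  · intro i
    rw [φ.src_eq, φ.tgt_eq, (hedge i).1, (hedge i).2]
    exact ⟨rfl, rfl⟩
  · intro i
    exact congrArg φ.vmap (hvs i)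
  · intro i
    exact congrArg φ.emap (hes i)

theorem isDblExt_saw (φ : G.Aut) {n : ℕ} {v v' : G.V} (hv : φ.vmap v = v')
    {w : G.SAW n v} (hw : G.IsDblExt w) : G.IsDblExt (φ.saw hv w) := by
  obtain ⟨vs, es, hinj, hedge, k, hvs, hes⟩ := hw
  refine ⟨fun j => φ.vmap (vs j), fun j => φ.emap (es j),
    fun a b hab => hinj (φ.vmap.injective hab), ?_, k, ?_, ?_⟩
  · intro i
    rw [φ.src_eq, φ.tgt_eq, (hedge i).1, (hedge i).2]
    exact ⟨rfl, rfl⟩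
  · intro i
    exact congrArg φ.vmap (hvs i)
  · intro i
    exact congrArg φ.emap (hes i)

theorem card_orbit (hlf : G.LocallyFinite) (n : ℕ) (P : ∀ {u : G.V}, G.SAW n u → Prop)
    (hP : ∀ (φ : G.Aut) (u u' : G.V) (hv : φ.vmap u = u') (w : G.SAW n u),
      P w → P (φ.saw hv w))
    (φ : G.Aut) {v v' : G.V} (hv : φ.vmap v = v') :
    Nat.card {w : G.SAW n v // P w} = Nat.card {w : G.SAW n v' // P w} := by
  haveI := sawFinite hlf n v
  haveI := sawFinite hlf n v'
  apply le_antisymm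
  · exact Nat.card_le_card_of_injective
      (fun w : {w : G.SAW n v // P w} => (⟨φ.saw hv w.1, hP φ v v' hv w.1 w.2⟩ :
        {w : G.SAW n v' // P w}))
      (fun a b h => Subtype.ext (φ.saw_injective hv (congrArg Subtype.val h)))
  · exact Nat.card_le_card_of_injective
      (fun w : {w : G.SAW n v' // P w} =>
        (⟨φ.inv.saw (φ.inv_vmap hv) w.1, hP φ.inv v' v (φ.inv_vmap hv) w.1 w.2⟩ :
        {w : G.SAW n v // P w}))
      (fun a b h => Subtype.ext (φ.inv.saw_injective (φ.inv_vmap hv) (congrArg Subtype.val h)))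

theorem sigmaB_orbit (hlf : G.LocallyFinite) (n : ℕ) (φ : G.Aut) {v v' : G.V}
    (hv : φ.vmap v = v') : G.sigmaB n v = G.sigmaB n v' :=
  card_orbit hlf n (fun w => G.IsBwdExt w)
    (fun φ _ _ hv w hw => isBwdExt_saw φ hv hw) φ hv

theorem sigmaFB_orbit (hlf : G.LocallyFinite) (n : ℕ) (φ : G.Aut) {v v' : G.V}
    (hv : φ.vmap v = v') : G.sigmaFB n v = G.sigmaFB n v' :=
  card_orbit hlf n (fun w => G.IsDblExt w)
    (fun φ _ _ hv w hw => isDblExt_saw φ hv hw) φ hv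

end Dgraph

section Konig

variable {X : ℕ → Type}

/-- Iterated restriction along an inverse system. -/
noncomputable def rle (ρ : ∀ m, X (m+1) → X m) (a : ℕ) : ∀ {b : ℕ}, a ≤ b → X b → X a :=
  fun {b} h => @Nat.leRec a (fun b _ => X b → X a) id
    (fun k _ ih => fun x => ih (ρ k x)) b h

theorem rle_self (ρ : ∀ m, X (m+1) → X m) (a : ℕ) (x : X a) :
    rle ρ a le_rfl x = x := by
  simp [rle, Nat.leRec_self]

theorem rle_succ (ρ : ∀ m, X (m+1) → X m) (a b : ℕ) (h1 : a ≤ b) (h2 : a ≤ b + 1)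
    (x : X (b+1)) : rle ρ a h2 x = rle ρ a h1 (ρ b x) := by
  show @Nat.leRec a (fun b _ => X b → X a) id (fun k _ ih => fun x => ih (ρ k x)) (b+1) h2 x = _
  rw [Nat.leRec_succ _ _ h1]
  rfl

theorem rle_bot (ρ : ∀ m, X (m+1) → X m) (a : ℕ) : ∀ (b : ℕ) (h1 : a ≤ b) (h2 : a + 1 ≤ b)
    (x : X b), rle ρ a h1 x = ρ a (rle ρ (a+1) h2 x) := by
  intro b
  induction b with
  | zero => intro h1 h2; omega
  | succ b ih =>
    intro h1 h2 x
    by_cases hb : a + 1 ≤ b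
    · rw [rle_succ ρ a b (by omega) h1, ih (by omega) hb, rle_succ ρ (a+1) b hb h2]
    · have hab : b = a := by omega
      subst hab
      rw [rle_succ ρ b b le_rfl h1, rle_self]
      exact congrArg (ρ b) (rle_self ρ (b+1) x).symm

theorem antitone_iInter_nonempty {α : Type*} [Finite α] (A : ℕ → Set α)
    (hdec : ∀ k, A (k+1) ⊆ A k) (hne : ∀ k, (A k).Nonempty) : (⋂ k, A k).Nonempty := by
  have hanti : Antitone A := antitone_nat_of_succ_le hdec
  obtain ⟨B, hBmem, hBmin⟩ : ∃ B ∈ Set.range A, ∀ B' ∈ Set.range A, id B' ≤ id B → id B = id B' := by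
    obtain ⟨B, hB, hBm⟩ := (Set.toFinite (Set.range A)).exists_minimal ⟨A 0, 0, rfl⟩
    exact ⟨B, hB, fun B' hB' hle => le_antisymm (hBm hB' hle) hle⟩
  obtain ⟨k0, rfl⟩ := hBmem
  obtain ⟨x, hx⟩ := hne k0
  refine ⟨x, Set.mem_iInter.2 fun k => ?_⟩
  have h1 : A (max k k0) ⊆ A k0 := hanti (le_max_right k k0)
  have h2 : id (A k0) = id (A (max k k0)) := hBmin _ ⟨max k k0, rfl⟩ h1
  have hx' : x ∈ A (max k k0) := by
    have : A k0 = A (max k k0) := h2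
    rw [← this]
    exact hx
  exact hanti (le_max_left k k0) hx'

end Konig

section Konig2

variable {X : ℕ → Type}

/-- Elements of `X a` that lift arbitrarily high in the inverse system. -/
def Sset (ρ : ∀ m, X (m+1) → X m) (a : ℕ) : Set (X a) :=
  {x | ∀ (b : ℕ) (h : a ≤ b), ∃ y : X b, rle ρ a h y = x}

theorem Sset_nonempty [∀ m, Finite (X m)] (hne : ∀ m, Nonempty (X m))
    (ρ : ∀ m, X (m+1) → X m) (a : ℕ) : (Sset ρ a).Nonempty := by
  set A : ℕ → Set (X a) := fun b => if h : a ≤ b then Set.range (rle ρ a h) else Set.univ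
    with hA
  have hdec : ∀ b, A (b+1) ⊆ A b := by
    intro b
    by_cases h : a ≤ b
    · rw [hA]
      simp only [dif_pos h, dif_pos (Nat.le_succ_of_le h)]
      rintro x ⟨y, rfl⟩
      exact ⟨ρ b y, (rle_succ ρ a b h _ y).symm⟩
    · simp only [hA, dif_neg h]
      exact fun x _ => Set.mem_univ x
  have hne' : ∀ b, (A b).Nonempty := by
    intro b
    by_cases h : a ≤ b
    · obtain ⟨y⟩ := hne b
      exact ⟨rle ρ a h y, by simp only [hA, dif_pos h]; exact ⟨y, rfl⟩⟩
    · simp only [hA, dif_neg h]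
      exact ⟨(hne a).some, Set.mem_univ _⟩
  obtain ⟨x, hx⟩ := antitone_iInter_nonempty A hdec hne'
  refine ⟨x, fun b h => ?_⟩
  have := Set.mem_iInter.1 hx b
  simp only [hA, dif_pos h] at this
  obtain ⟨y, hy⟩ := this
  exact ⟨y, hy⟩

theorem Sset_step [∀ m, Finite (X m)] (hne : ∀ m, Nonempty (X m))
    (ρ : ∀ m, X (m+1) → X m) (a : ℕ) (x : X a) (hx : x ∈ Sset ρ a) :
    ∃ y : X (a+1), ρ a y = x ∧ y ∈ Sset ρ (a+1) := by
  set B : ℕ → Set (X (a+1)) := fun b =>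
    if h : a + 1 ≤ b then {y | ρ a y = x ∧ ∃ z : X b, rle ρ (a+1) h z = y} else Set.univ
    with hB
  have hdec : ∀ b, B (b+1) ⊆ B b := by
    intro b
    by_cases h : a + 1 ≤ b
    · rw [hB]
      simp only [dif_pos h, dif_pos (Nat.le_succ_of_le h)]
      rintro y ⟨h1, z, rfl⟩
      exact ⟨h1, ρ b z, (rle_succ ρ (a+1) b h _ z).symm⟩
    · simp only [hB, dif_neg h]
      exact fun y _ => Set.mem_univ y
  have hne' : ∀ b, (B b).Nonempty := by
    intro b
    by_cases h : a + 1 ≤ b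
    · obtain ⟨w, hw⟩ := hx b (by omega)
      refine ⟨rle ρ (a+1) h w, ?_⟩
      simp only [hB, dif_pos h]
      refine ⟨?_, w, rfl⟩
      rw [← rle_bot ρ a b (by omega) h w]
      rw [← hw]
    · simp only [hB, dif_neg h]
      exact ⟨(hne (a+1)).some, Set.mem_univ _⟩
  obtain ⟨y, hy⟩ := antitone_iInter_nonempty B hdec hne'
  have key : ∀ (b : ℕ) (h : a + 1 ≤ b), ρ a y = x ∧ ∃ z : X b, rle ρ (a+1) h z = y := by
    intro b h
    have := Set.mem_iInter.1 hy b
    simp only [hB, dif_pos h] at this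
    exact this
  refine ⟨y, (key (a+1) le_rfl).1, fun b h => (key b h).2⟩

theorem exists_invSeq [∀ m, Finite (X m)] (hne : ∀ m, Nonempty (X m))
    (ρ : ∀ m, X (m+1) → X m) : ∃ g : ∀ m, X m, ∀ m, ρ m (g (m+1)) = g m := by
  have h0 := Sset_nonempty hne ρ 0
  set g : ∀ m, {x : X m // x ∈ Sset ρ m} := fun m => by
    induction m with
    | zero => exact ⟨h0.choose, h0.choose_spec⟩
    | succ a ih =>
      exact ⟨(Sset_step hne ρ a ih.1 ih.2).choose,
        (Sset_step hne ρ a ih.1 ih.2).choose_spec.2⟩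
    with hg
  refine ⟨fun m => (g m).1, fun m => ?_⟩
  show ρ m (g (m+1)).1 = (g m).1
  have : g (m+1) = ⟨(Sset_step hne ρ m (g m).1 (g m).2).choose,
      (Sset_step hne ρ m (g m).1 (g m).2).choose_spec.2⟩ := by
    rw [hg]
  rw [this]
  exact (Sset_step hne ρ m (g m).1 (g m).2).choose_spec.1

end Konig2

namespace Dgraph

variable {G : Dgraph}

/-- Two-sided finite extensions of a SAW: `m` backward steps and `m` forward steps. -/
def TwoExt (hlf : G.LocallyFinite) {n : ℕ} {v : G.V} (w : G.SAW n v) (m : ℕ) : Type :=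
  {q : G.rev.SAW m v × G.SAW (n+m) v //
    take n (Nat.le_add_right n m) q.2 = w ∧
    ∀ (i : Fin (m+1)) (j : Fin (n+m+1)), q.1.vs i = q.2.vs j → i.1 = 0 ∧ j.1 = 0}

theorem twoExt_finite (hlf : G.LocallyFinite) {n : ℕ} {v : G.V} (w : G.SAW n v) (m : ℕ) :
    Finite (TwoExt hlf w m) := by
  haveI := sawFinite (rev_locallyFinite hlf) m v
  haveI := sawFinite hlf (n+m) v
  unfold TwoExt
  infer_instance

theorem twoExt_nonempty (hlf : G.LocallyFinite) {n : ℕ} {v : G.V} (w : G.SAW n v) (m : ℕ)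
    (H : ∃ w' : G.SAW (n+m) v, G.IsBwdExt w' ∧ take n (Nat.le_add_right n m) w' = w) :
    Nonempty (TwoExt hlf w m) := by
  obtain ⟨w', hBwd, htake⟩ := H
  obtain ⟨vsW, esW, hinjW, hedgeW, hvsW, hesW⟩ := hBwd
  have hv0 : vsW (n + m) = v := by
    have h := hvsW ⟨0, by omega⟩
    simp only [Fin.val_mk, Nat.sub_zero] at h
    exact h.trans ((vs_congr w' (by simp)).trans w'.hstart)
  refine ⟨⟨(⟨fun i => vsW (n + m + i.1), fun i => esW (n + m + i.1), ?_, ?_, ?_, ?_⟩, w'),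
    htake, ?_⟩⟩
  · intro i
    exact (hedgeW (n + m + i.1)).2
  · intro i
    exact (hedgeW (n + m + i.1)).1
  · exact (by simp only [Fin.val_zero, Nat.add_zero]; exact hv0)
  · intro i j h
    have hi := i.isLt
    have hj := j.isLt
    have := hinjW h
    exact Fin.ext (by omega)
  · intro i j h
    have hi := i.isLt
    have hj := j.isLt
    have h2 := hvsW j
    simp only [Fin.val_mk] at h2 h
    rw [← h2] at h
    have := hinjW h
    omega

/-- Restriction of a two-sided extension. -/
def twoExtRes (hlf : G.LocallyFinite) {n : ℕ} {v : G.V} (w : G.SAW n v) (m : ℕ)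
    (q : TwoExt hlf w (m+1)) : TwoExt hlf w m := by
  refine ⟨(take m (Nat.le_succ m) q.1.1, take (n+m) (by omega) q.1.2), ?_, ?_⟩
  · rw [take_take]
    exact q.2.1
  · intro i j h
    have hi := i.isLt
    have hj := j.isLt
    have := q.2.2 ⟨i.1, by omega⟩ ⟨j.1, by omega⟩ h
    simpa using this

theorem isDblExt_of_arbitrary_ext (hlf : G.LocallyFinite) {n : ℕ} {v : G.V} (w : G.SAW n v)
    (H : ∀ m, ∃ w' : G.SAW (n+m) v, G.IsBwdExt w' ∧ take n (Nat.le_add_right n m) w' = w) :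
    G.IsDblExt w := by
  haveI : ∀ m, Finite (TwoExt hlf w m) := twoExt_finite hlf w
  obtain ⟨g, hg⟩ := exists_invSeq (fun m => twoExt_nonempty hlf w m (H m))
    (fun m => twoExtRes hlf w m)
  -- coherence lemmas
  have coh1 : ∀ (a b : ℕ) (h : a ≤ b) (i : ℕ) (hi : i ≤ a),
      (g a).1.1.vs ⟨i, by omega⟩ = (g b).1.1.vs ⟨i, by omega⟩ := by
    intro a b h
    induction b, h using Nat.le_induction with
    | base => intro i hi; exact vs_congr _ rfl
    | succ b hb ih =>
      intro i hi
      rw [ih i hi]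
      have h2 := congrArg (fun q => q.1.1.vs (⟨i, by omega⟩ : Fin (b+1))) (hg b)
      exact h2.symm
  have coh2 : ∀ (a b : ℕ) (h : a ≤ b) (i : ℕ) (hi : i < a),
      (g a).1.1.es ⟨i, by omega⟩ = (g b).1.1.es ⟨i, by omega⟩ := by
    intro a b h
    induction b, h using Nat.le_induction with
    | base => intro i hi; exact es_congr _ rfl
    | succ b hb ih =>
      intro i hi
      rw [ih i hi]
      have h2 := congrArg (fun q => q.1.1.es (⟨i, by omega⟩ : Fin b)) (hg b)
      exact h2.symm
  have coh3 : ∀ (a b : ℕ) (h : a ≤ b) (i : ℕ) (hi : i ≤ n + a),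
      (g a).1.2.vs ⟨i, by omega⟩ = (g b).1.2.vs ⟨i, by omega⟩ := by
    intro a b h
    induction b, h using Nat.le_induction with
    | base => intro i hi; exact vs_congr _ rfl
    | succ b hb ih =>
      intro i hi
      rw [ih i hi]
      have h2 := congrArg (fun q => q.1.2.vs (⟨i, by omega⟩ : Fin (n+b+1))) (hg b)
      exact h2.symm
  have coh4 : ∀ (a b : ℕ) (h : a ≤ b) (i : ℕ) (hi : i < n + a),
      (g a).1.2.es ⟨i, by omega⟩ = (g b).1.2.es ⟨i, by omega⟩ := by
    intro a b h
    induction b, h using Nat.le_induction with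
    | base => intro i hi; exact es_congr _ rfl
    | succ b hb ih =>
      intro i hi
      rw [ih i hi]
      have h2 := congrArg (fun q => q.1.2.es (⟨i, by omega⟩ : Fin (n+b))) (hg b)
      exact h2.symm
  set vsZ : ℤ → G.V := fun j =>
    if h : 0 ≤ j then (g j.toNat).1.2.vs ⟨j.toNat, by omega⟩
    else (g (-j).toNat).1.1.vs ⟨(-j).toNat, by omega⟩ with hvsZ
  set esZ : ℤ → G.E := fun j =>
    if h : 0 ≤ j then (g (j.toNat + 1)).1.2.es ⟨j.toNat, by omega⟩
    else (g (-j).toNat).1.1.es ⟨(-j).toNat - 1, by omega⟩ with hesZ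
  have evV : ∀ (j : ℤ) (hj : 0 ≤ j) (b : ℕ) (hb : j.toNat ≤ n + b),
      vsZ j = (g b).1.2.vs ⟨j.toNat, by omega⟩ := by
    intro j hj b hb
    rw [hvsZ]
    simp only [hj, ↓reduceDIte]
    rw [coh3 j.toNat (max j.toNat b) (le_max_left _ _) j.toNat (by omega),
      coh3 b (max j.toNat b) (le_max_right _ _) j.toNat hb]
  have evV' : ∀ (j : ℤ) (hj : j < 0) (b : ℕ) (hb : (-j).toNat ≤ b),
      vsZ j = (g b).1.1.vs ⟨(-j).toNat, by omega⟩ := by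
    intro j hj b hb
    rw [hvsZ]
    simp only [show ¬ (0:ℤ) ≤ j by omega, ↓reduceDIte]
    rw [coh1 (-j).toNat (max (-j).toNat b) (le_max_left _ _) (-j).toNat (by omega),
      coh1 b (max (-j).toNat b) (le_max_right _ _) (-j).toNat hb]
  have evE : ∀ (j : ℤ) (hj : 0 ≤ j) (b : ℕ) (hb : j.toNat < n + b),
      esZ j = (g b).1.2.es ⟨j.toNat, by omega⟩ := by
    intro j hj b hb
    rw [hesZ]
    simp only [hj, ↓reduceDIte]
    rw [coh4 (j.toNat + 1) (max (j.toNat + 1) b) (le_max_left _ _) j.toNat (by omega),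
      coh4 b (max (j.toNat + 1) b) (le_max_right _ _) j.toNat hb]
  have evE' : ∀ (j : ℤ) (hj : j < 0) (b : ℕ) (hb : (-j).toNat ≤ b),
      esZ j = (g b).1.1.es ⟨(-j).toNat - 1, by omega⟩ := by
    intro j hj b hb
    rw [hesZ]
    simp only [show ¬ (0:ℤ) ≤ j by omega, ↓reduceDIte]
    rw [coh2 (-j).toNat (max (-j).toNat b) (le_max_left _ _) ((-j).toNat - 1) (by omega),
      coh2 b (max (-j).toNat b) (le_max_right _ _) ((-j).toNat - 1) (by omega)]
  refine ⟨vsZ, esZ, ?_, ?_, 0, ?_, ?_⟩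
  · -- injectivity
    intro a b hab
    by_cases ha : 0 ≤ a <;> by_cases hb : 0 ≤ b
    · set c := a.toNat + b.toNat with hc
      rw [evV a ha c (by omega), evV b hb c (by omega)] at hab
      have := congrArg Fin.val ((g c).1.2.hinj hab)
      simp only [Fin.val_mk] at this
      omega
    · set c := a.toNat + (-b).toNat with hc
      rw [evV a ha c (by omega), evV' b (by omega) c (by omega)] at hab
      have := (g c).2.2 ⟨(-b).toNat, by omega⟩ ⟨a.toNat, by omega⟩ hab.symm
      simp only [Fin.val_mk] at this
      omega
    · set c := (-a).toNat + b.toNat with hc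
      rw [evV' a (by omega) c (by omega), evV b hb c (by omega)] at hab
      have := (g c).2.2 ⟨(-a).toNat, by omega⟩ ⟨b.toNat, by omega⟩ hab
      simp only [Fin.val_mk] at this
      omega
    · set c := (-a).toNat + (-b).toNat with hc
      rw [evV' a (by omega) c (by omega), evV' b (by omega) c (by omega)] at hab
      have := congrArg Fin.val ((g c).1.1.hinj hab)
      simp only [Fin.val_mk] at this
      omega
  · -- edges
    intro j
    by_cases hj : 0 ≤ j
    · set t := j.toNat with ht
      constructor
      · rw [evE j hj (t+1) (by omega), evV j hj (t+1) (by omega)]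
        have h1 := (g (t+1)).1.2.hsrc ⟨t, by omega⟩
        rw [h1]
        exact vs_congr _ rfl
      · rw [evE j hj (t+1) (by omega), evV (j+1) (by omega) (t+1) (by omega)]
        have h1 := (g (t+1)).1.2.htgt ⟨t, by omega⟩
        rw [h1]
        exact vs_congr _ (by simp only [Fin.val_succ, Fin.val_mk]; omega)
    · set s := (-j).toNat with hs
      have hs1 : 1 ≤ s := by omega
      constructor
      · rw [evE' j (by omega) s le_rfl, evV' j (by omega) s le_rfl]
        have h1 := (g s).1.1.htgt ⟨s - 1, by omega⟩
        show G.rev.tgt _ = _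
        rw [h1]
        exact vs_congr _ (by simp only [Fin.val_succ, Fin.val_mk]; omega)
      · rw [evE' j (by omega) s le_rfl]
        have h1 := (g s).1.1.hsrc ⟨s - 1, by omega⟩
        show G.rev.src _ = _
        rw [h1]
        by_cases hj1 : j + 1 < 0
        · rw [evV' (j+1) hj1 s (by omega)]
          exact vs_congr _ (by simp only [Fin.coe_castSucc, Fin.val_mk]; omega)
        · have hj0 : j = -1 := by omega
          subst hj0
          have : (-1 : ℤ) + 1 = 0 := by omega
          rw [this, evV 0 le_rfl 0 (by omega)]
          have e1 : (g s).1.1.vs (Fin.castSucc ⟨s - 1, by omega⟩) = (g s).1.1.vs 0 :=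
            vs_congr _ (by simp only [Fin.coe_castSucc, Fin.val_mk, Fin.val_zero]; omega)
          rw [e1, (g s).1.1.hstart]
          have e2 : (g 0).1.2.vs ⟨(0:ℤ).toNat, by omega⟩ = (g 0).1.2.vs 0 :=
            vs_congr _ (by simp)
          rw [e2, (g 0).1.2.hstart]
  · -- vertex anchors
    intro i
    have hi := i.isLt
    have h1 := evV (0 + (i.1 : ℤ)) (by omega) 0 (by omega)
    rw [h1]
    have h2 := congrArg (fun u => u.vs i) (g 0).2.1
    refine Eq.trans ?_ h2
    exact vs_congr _ (by simp only [Fin.val_mk]; omega)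
  · -- edge anchors
    intro i
    have hi := i.isLt
    have h1 := evE (0 + (i.1 : ℤ)) (by omega) 1 (by omega)
    rw [h1]
    have h2 := congrArg (fun u => u.es i) (g 1).2.1
    refine Eq.trans ?_ h2
    exact es_congr _ (by simp only [Fin.val_mk]; omega)

end Dgraph

namespace Dgraph

variable {G : Dgraph}

/-- `w` has a backward-extendable forward extension by `m` steps. -/
def HasExtB {n : ℕ} {v : G.V} (m : ℕ) (w : G.SAW n v) : Prop :=
  ∃ w' : G.SAW (n+m) v, G.IsBwdExt w' ∧ take n (Nat.le_add_right n m) w' = w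

theorem hasExtB_mono {n : ℕ} {v : G.V} {m m' : ℕ} (h : m ≤ m') {w : G.SAW n v}
    (hw : HasExtB m' w) : HasExtB m w := by
  obtain ⟨w', hB, ht⟩ := hw
  refine ⟨take (n+m) (by omega) w', isBwdExt_take _ hB, ?_⟩
  rw [take_take]
  exact ht

theorem exists_uniformM_at (hlf : G.LocallyFinite) (n : ℕ) (v : G.V) :
    ∃ M : ℕ, ∀ w : G.SAW n v, HasExtB M w → G.IsDblExt w := by
  haveI := sawFinite hlf n v
  have hch : ∀ w : G.SAW n v, ∃ mw : ℕ, ¬ G.IsDblExt w → ¬ HasExtB mw w := by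
    intro w
    by_cases hd : G.IsDblExt w
    · exact ⟨0, fun h => absurd hd h⟩
    · by_contra hcon
      push_neg at hcon
      exact hd (isDblExt_of_arbitrary_ext hlf w fun m => (hcon m).2)
  choose f hf using hch
  obtain ⟨M, hM⟩ := (Set.finite_range f).bddAbove
  refine ⟨M, fun w hw => ?_⟩
  by_contra hd
  exact hf w hd (hasExtB_mono (hM ⟨w, rfl⟩) hw)

theorem exists_uniformM (hlf : G.LocallyFinite) (hqt : G.QuasiTransitive) (n : ℕ) :
    ∃ M : ℕ, ∀ (v : G.V) (w : G.SAW n v), HasExtB M w → G.IsDblExt w := by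
  obtain ⟨S, hS⟩ := hqt
  set f : G.V → ℕ := fun s => (exists_uniformM_at hlf n s).choose with hfdef
  refine ⟨S.sup f, fun v w hw => ?_⟩
  obtain ⟨s, hs, φ, hφ⟩ := hS v
  have hψ : φ.inv.vmap v = s := φ.inv_vmap hφ
  have hw0 : HasExtB (f s) (φ.inv.saw hψ w) := by
    refine hasExtB_mono (Finset.le_sup hs) ?_
    obtain ⟨w', hB, ht⟩ := hw
    refine ⟨φ.inv.saw hψ w', isBwdExt_saw _ _ hB, ?_⟩
    rw [take_saw]
    rw [ht]
  have hdbl0 := (exists_uniformM_at hlf n s).choose_spec (φ.inv.saw hψ w) hw0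
  have := isDblExt_saw φ hφ hdbl0
  rwa [φ.saw_saw_inv hφ hψ w] at this

theorem split_card (hlf : G.LocallyFinite) (n m : ℕ) (v : G.V)
    (Q : G.SAW (n+m) v → Prop) (Q₁ : G.SAW n v → Prop) (Q₂ : ∀ u : G.V, G.SAW m u → Prop)
    (h : ∀ w : G.SAW (n+m) v, Q w →
      Q₁ (take n (Nat.le_add_right n m) w) ∧ Q₂ _ (drop n m rfl w)) :
    (Nat.card {w : G.SAW (n+m) v // Q w} : ℝ≥0∞) ≤
      (Nat.card {w : G.SAW n v // Q₁ w}) *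
        ⨆ u : G.V, (Nat.card {w : G.SAW m u // Q₂ u w} : ℝ≥0∞) := by
  haveI := sawFinite hlf (n+m) v
  haveI := sawFinite hlf n v
  haveI : ∀ u : G.V, Finite (G.SAW m u) := sawFinite hlf m
  set F : {w : G.SAW (n+m) v // Q w} →
      Σ w₁ : {w : G.SAW n v // Q₁ w},
        {w₂ : G.SAW m (w₁.1.vs (Fin.last n)) // Q₂ _ w₂} :=
    fun w => ⟨⟨take n (Nat.le_add_right n m) w.1, (h w.1 w.2).1⟩,
      ⟨drop n m rfl w.1, (h w.1 w.2).2⟩⟩ with hF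
  have hFinj : Function.Injective F := by
    intro a b hab
    have htk : take n (Nat.le_add_right n m) a.1 = take n (Nat.le_add_right n m) b.1 := by
      have := congrArg (fun p => p.1.1) hab
      simpa [hF] using this
    have hvs2 : (drop n m rfl a.1).vs = (drop n m rfl b.1).vs := by
      have := congrArg (fun p => p.2.1.vs) hab
      simpa [hF] using this
    have hes2 : (drop n m rfl a.1).es = (drop n m rfl b.1).es := by
      have := congrArg (fun p => p.2.1.es) hab
      simpa [hF] using this
    apply Subtype.ext
    ext i
    · by_cases hi : i.1 ≤ n
      · have := congrArg (fun u => u.vs (⟨i.1, by omega⟩ : Fin (n+1))) htk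
        simp only [take_vs] at this
        calc a.1.vs i = a.1.vs ⟨i.1, by omega⟩ := vs_congr _ rfl
          _ = b.1.vs ⟨i.1, by omega⟩ := this
          _ = b.1.vs i := vs_congr _ rfl
      · have hi2 := i.isLt
        have := congrFun hvs2 ⟨i.1 - n, by omega⟩
        show a.1.vs i = b.1.vs i
        calc a.1.vs i = a.1.vs ⟨n + (i.1 - n), by omega⟩ :=
              vs_congr _ (by simp only [Fin.val_mk]; omega)
          _ = (drop n m rfl a.1).vs ⟨i.1 - n, by omega⟩ := rfl
          _ = (drop n m rfl b.1).vs ⟨i.1 - n, by omega⟩ := this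
          _ = b.1.vs ⟨n + (i.1 - n), by omega⟩ := rfl
          _ = b.1.vs i := vs_congr _ (by simp only [Fin.val_mk]; omega)
    · by_cases hi : i.1 < n
      · have := congrArg (fun u => u.es (⟨i.1, hi⟩ : Fin n)) htk
        simp only [take_es] at this
        calc a.1.es i = a.1.es ⟨i.1, by omega⟩ := es_congr _ rfl
          _ = b.1.es ⟨i.1, by omega⟩ := this
          _ = b.1.es i := es_congr _ rfl
      · have hi2 := i.isLt
        have := congrFun hes2 ⟨i.1 - n, by omega⟩
        show a.1.es i = b.1.es i
        calc a.1.es i = a.1.es ⟨n + (i.1 - n), by omega⟩ :=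
              es_congr _ (by simp only [Fin.val_mk]; omega)
          _ = (drop n m rfl a.1).es ⟨i.1 - n, by omega⟩ := rfl
          _ = (drop n m rfl b.1).es ⟨i.1 - n, by omega⟩ := this
          _ = b.1.es ⟨n + (i.1 - n), by omega⟩ := rfl
          _ = b.1.es i := es_congr _ (by simp only [Fin.val_mk]; omega)
  have hcard := Nat.card_le_card_of_injective F hFinj
  letI : Fintype {w : G.SAW n v // Q₁ w} := Fintype.ofFinite _
  letI : ∀ w₁ : {w : G.SAW n v // Q₁ w},
      Fintype {w₂ : G.SAW m (w₁.1.vs (Fin.last n)) // Q₂ _ w₂} := fun w₁ => Fintype.ofFinite _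
  have hsig : Nat.card (Σ w₁ : {w : G.SAW n v // Q₁ w},
      {w₂ : G.SAW m (w₁.1.vs (Fin.last n)) // Q₂ _ w₂}) =
      ∑ w₁ : {w : G.SAW n v // Q₁ w},
        Nat.card {w₂ : G.SAW m (w₁.1.vs (Fin.last n)) // Q₂ _ w₂} := by
    rw [Nat.card_eq_fintype_card, Fintype.card_sigma]
    exact Finset.sum_congr rfl fun b _ => (Nat.card_eq_fintype_card).symm
  calc (Nat.card {w : G.SAW (n+m) v // Q w} : ℝ≥0∞)
      ≤ (Nat.card (Σ w₁ : {w : G.SAW n v // Q₁ w},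
          {w₂ : G.SAW m (w₁.1.vs (Fin.last n)) // Q₂ _ w₂}) : ℝ≥0∞) := by
        exact_mod_cast hcard
    _ = ∑ w₁ : {w : G.SAW n v // Q₁ w},
          (Nat.card {w₂ : G.SAW m (w₁.1.vs (Fin.last n)) // Q₂ _ w₂} : ℝ≥0∞) := by
        rw [hsig]
        push_cast
        rfl
    _ ≤ ∑ _w₁ : {w : G.SAW n v // Q₁ w},
          ⨆ u : G.V, (Nat.card {w : G.SAW m u // Q₂ u w} : ℝ≥0∞) := by
        apply Finset.sum_le_sum
        intro w₁ _
        exact le_iSup (fun u => (Nat.card {w : G.SAW m u // Q₂ u w} : ℝ≥0∞)) _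
    _ = (Fintype.card {w : G.SAW n v // Q₁ w}) *
          ⨆ u : G.V, (Nat.card {w : G.SAW m u // Q₂ u w} : ℝ≥0∞) := by
        rw [Finset.sum_const, Finset.card_univ, nsmul_eq_mul]
    _ = (Nat.card {w : G.SAW n v // Q₁ w}) *
          ⨆ u : G.V, (Nat.card {w : G.SAW m u // Q₂ u w} : ℝ≥0∞) := by
        rw [Nat.card_eq_fintype_card]

theorem ssigmaB_submul (hlf : G.LocallyFinite) (n m : ℕ) :
    G.ssigmaB (n + m) ≤ G.ssigmaB n * G.ssigmaB m := by
  apply iSup_le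
  intro v
  have := split_card hlf n m v (fun w => G.IsBwdExt w) (fun w => G.IsBwdExt w)
    (fun u w => G.IsBwdExt w)
    (fun w hw => ⟨isBwdExt_take _ hw, isBwdExt_drop rfl hw⟩)
  refine le_trans this ?_
  apply mul_le_mul' ?_ le_rfl
  exact le_iSup (fun v => (G.sigmaB n v : ℝ≥0∞)) v

theorem ssigmaFB_submul (hlf : G.LocallyFinite) (n m : ℕ) :
    G.ssigmaFB (n + m) ≤ G.ssigmaFB n * G.ssigmaFB m := by
  apply iSup_le
  intro v
  have := split_card hlf n m v (fun w => G.IsDblExt w) (fun w => G.IsDblExt w)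
    (fun u w => G.IsDblExt w)
    (fun w hw => ⟨isDblExt_take _ hw, isDblExt_drop rfl hw⟩)
  refine le_trans this ?_
  apply mul_le_mul' ?_ le_rfl
  exact le_iSup (fun v => (G.sigmaFB n v : ℝ≥0∞)) v

theorem ssigmaB_star (hlf : G.LocallyFinite) (hqt : G.QuasiTransitive) (n : ℕ) :
    ∃ M : ℕ, ∀ m, M ≤ m → G.ssigmaB (n + m) ≤ G.ssigmaFB n * G.ssigmaB m := by
  obtain ⟨M, hM⟩ := exists_uniformM hlf hqt n
  refine ⟨M, fun m hm => ?_⟩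
  apply iSup_le
  intro v
  have := split_card hlf n m v (fun w => G.IsBwdExt w) (fun w => G.IsDblExt w)
    (fun u w => G.IsBwdExt w) ?_
  · refine le_trans this ?_
    apply mul_le_mul' ?_ le_rfl
    exact le_iSup (fun v => (G.sigmaFB n v : ℝ≥0∞)) v
  · intro w hw
    refine ⟨?_, isBwdExt_drop rfl hw⟩
    apply hM
    refine ⟨take (n + M) (by omega) w, isBwdExt_take _ hw, ?_⟩
    rw [take_take]

theorem sigmaFB_le_sigmaB (hlf : G.LocallyFinite) (n : ℕ) (v : G.V) :
    G.sigmaFB n v ≤ G.sigmaB n v := by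
  haveI := sawFinite hlf n v
  exact Nat.card_le_card_of_injective
    (fun w : {w : G.SAW n v // G.IsDblExt w} =>
      (⟨w.1, isBwdExt_of_isDblExt w.2⟩ : {w : G.SAW n v // G.IsBwdExt w}))
    (by intro a b hab
        apply Subtype.ext
        have h2 : (⟨a.1, isBwdExt_of_isDblExt a.2⟩ : {w : G.SAW n v // G.IsBwdExt w}) =
            ⟨b.1, isBwdExt_of_isDblExt b.2⟩ := hab
        exact Subtype.mk_eq_mk.1 h2)

theorem ssigmaB_ne_top (hlf : G.LocallyFinite) (hqt : G.QuasiTransitive) (n : ℕ) :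
    G.ssigmaB n ≠ ⊤ := by
  obtain ⟨S, hS⟩ := hqt
  have hbd : G.ssigmaB n ≤ (S.sup (fun s => G.sigmaB n s) : ℕ) := by
    apply iSup_le
    intro v
    obtain ⟨s, hs, φ, hφ⟩ := hS v
    rw [← sigmaB_orbit hlf n φ hφ]
    exact_mod_cast Finset.le_sup hs
  exact ne_top_of_le_ne_top (ENNReal.natCast_ne_top _) hbd

theorem ssigmaFB_ne_top (hlf : G.LocallyFinite) (hqt : G.QuasiTransitive) (n : ℕ) :
    G.ssigmaFB n ≠ ⊤ := by
  obtain ⟨S, hS⟩ := hqt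
  have hbd : G.ssigmaFB n ≤ (S.sup (fun s => G.sigmaFB n s) : ℕ) := by
    apply iSup_le
    intro v
    obtain ⟨s, hs, φ, hφ⟩ := hS v
    rw [← sigmaFB_orbit hlf n φ hφ]
    exact_mod_cast Finset.le_sup hs
  exact ne_top_of_le_ne_top (ENNReal.natCast_ne_top _) hbd

theorem ssigmaB_one_le (n : ℕ) (h : G.ssigmaB n ≠ 0) : 1 ≤ G.ssigmaB n := by
  by_contra hlt
  push_neg at hlt
  apply h
  apply le_antisymm ?_ zero_le
  apply iSup_le
  intro v
  have : (G.sigmaB n v : ℝ≥0∞) < 1 := lt_of_le_of_lt (le_iSup (fun v => (G.sigmaB n v : ℝ≥0∞)) v) hlt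
  have : G.sigmaB n v = 0 := by exact_mod_cast Nat.lt_one_iff.1 (by exact_mod_cast this)
  simp [this]

theorem ssigmaFB_one_le (n : ℕ) (h : G.ssigmaFB n ≠ 0) : 1 ≤ G.ssigmaFB n := by
  by_contra hlt
  push_neg at hlt
  apply h
  apply le_antisymm ?_ zero_le
  apply iSup_le
  intro v
  have : (G.sigmaFB n v : ℝ≥0∞) < 1 := lt_of_le_of_lt (le_iSup (fun v => (G.sigmaFB n v : ℝ≥0∞)) v) hlt
  have : G.sigmaFB n v = 0 := by exact_mod_cast Nat.lt_one_iff.1 (by exact_mod_cast this)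
  simp [this]

theorem ssigmaFB_le_ssigmaB (hlf : G.LocallyFinite) (n : ℕ) :
    G.ssigmaFB n ≤ G.ssigmaB n := by
  apply iSup_le
  intro v
  refine le_trans ?_ (le_iSup (fun v => (G.sigmaB n v : ℝ≥0∞)) v)
  exact_mod_cast sigmaFB_le_sigmaB hlf n v

end Dgraph

section Fekete

open Real Filter

theorem ennreal_fekete (a : ℕ → ℝ≥0∞) (hfin : ∀ n, a n ≠ ⊤) (hone : ∀ n, a n ≠ 0 → 1 ≤ a n)
    (hsub : ∀ m n, a (m + n) ≤ a m * a n) :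
    ∃ μ : ℝ≥0∞, Tendsto (fun n : ℕ => a n ^ (1/(n:ℝ))) atTop (nhds μ) ∧
      ∀ k : ℕ, k ≠ 0 → μ ≤ a k ^ (1/(k:ℝ)) := by
  by_cases hz : ∃ N, a N = 0
  · obtain ⟨N, hN⟩ := hz
    refine ⟨0, ?_, fun k _ => zero_le⟩
    apply Tendsto.congr' ?_ (tendsto_const_nhds (x := (0:ℝ≥0∞)))
    rw [Filter.EventuallyEq, eventually_atTop]
    refine ⟨N + 1, fun n hn => ?_⟩
    have hzero : a n = 0 := by
      have h2 := hsub N (n - N)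
      rw [show N + (n - N) = n by omega, hN, zero_mul] at h2
      exact le_antisymm h2 zero_le
    rw [hzero]
    refine (ENNReal.zero_rpow_of_pos ?_).symm
    rw [one_div]
    exact inv_pos.2 (by exact_mod_cast (by omega : 0 < n))
  · push_neg at hz
    have h1 : ∀ n, 1 ≤ a n := fun n => hone n (hz n)
    have h1R : ∀ n, 1 ≤ (a n).toReal := by
      intro n
      have := ENNReal.toReal_mono (hfin n) (h1 n)
      simpa using this
    set u : ℕ → ℝ := fun n => Real.log (a n).toReal with hu
    have hu0 : ∀ n, 0 ≤ u n := fun n => Real.log_nonneg (h1R n)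
    have husub : Subadditive u := by
      intro m n
      have htop : a m * a n ≠ ⊤ := ENNReal.mul_ne_top (hfin m) (hfin n)
      have h2 : (a (m+n)).toReal ≤ (a m * a n).toReal :=
        ENNReal.toReal_mono htop (hsub m n)
      rw [ENNReal.toReal_mul] at h2
      calc u (m+n) ≤ Real.log ((a m).toReal * (a n).toReal) :=
            Real.log_le_log (by linarith [h1R (m+n)]) h2
        _ = u m + u n := Real.log_mul (by linarith [h1R m]) (by linarith [h1R n])
    have hbdd : BddBelow (Set.range fun n => u n / (n:ℝ)) := by
      refine ⟨0, ?_⟩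
      rintro x ⟨n, rfl⟩
      exact div_nonneg (hu0 n) (Nat.cast_nonneg n)
    have hlim := husub.tendsto_lim hbdd
    have heq : ∀ n : ℕ, a n ^ (1/(n:ℝ)) = ENNReal.ofReal (Real.exp (u n / n)) := by
      intro n
      rcases Nat.eq_zero_or_pos n with h0 | hpos
      · subst h0
        simp
      · have hpos' : (0:ℝ) < (a n).toReal := by linarith [h1R n]
        conv_lhs => rw [← ENNReal.ofReal_toReal (hfin n)]
        rw [ENNReal.ofReal_rpow_of_pos hpos']
        congr 1
        rw [Real.rpow_def_of_pos hpos']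
        congr 1
        rw [hu]
        ring
    refine ⟨ENNReal.ofReal (Real.exp husub.lim), ?_, ?_⟩
    · apply Tendsto.congr (fun n => (heq n).symm)
      exact (ENNReal.continuous_ofReal.tendsto _).comp
        ((Real.continuous_exp.tendsto _).comp hlim)
    · intro k hk
      rw [heq k]
      apply ENNReal.ofReal_le_ofReal
      apply Real.exp_le_exp.2
      exact husub.lim_le_div hbdd hk

end Fekete

section RpowLim

open Filter

theorem ennreal_rpow_tendsto (c : ℝ≥0∞) (hc0 : c ≠ 0) (hctop : c ≠ ⊤) {e : ℕ → ℝ} {l : ℝ}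
    (he : Tendsto e atTop (nhds l)) :
    Tendsto (fun k : ℕ => c ^ (e k)) atTop (nhds (c ^ l)) := by
  have hpos : 0 < c.toReal := ENNReal.toReal_pos hc0 hctop
  have hrw : ∀ t : ℝ, c ^ t = ENNReal.ofReal (c.toReal ^ t) := by
    intro t
    conv_lhs => rw [← ENNReal.ofReal_toReal hctop]
    rw [ENNReal.ofReal_rpow_of_pos hpos]
  have hcont : Tendsto (fun t : ℝ => c.toReal ^ t) (nhds l) (nhds (c.toReal ^ l)) := by
    have hfun : (fun t : ℝ => c.toReal ^ t) = fun t => Real.exp (Real.log c.toReal * t) :=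
      funext fun t => Real.rpow_def_of_pos hpos t
    rw [hfun, Real.rpow_def_of_pos hpos l]
    exact (Real.continuous_exp.comp (continuous_const.mul continuous_id)).tendsto l
  rw [hrw l]
  apply Tendsto.congr (fun k => (hrw (e k)).symm)
  exact (ENNReal.continuous_ofReal.tendsto _).comp (hcont.comp he)

end RpowLim


/-- the limits `μ^B` and `μ^{FB}` exist and `μ^B = μ^{FB}`. -/
theorem muB_eq_muFB (G : Dgraph) (hinf : Infinite G.V) (hlf : G.LocallyFinite)
    (hsc : G.StronglyConnected) (hqt : G.QuasiTransitive) :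
    ∃ μB μFB : ℝ≥0∞,
      Tendsto (fun n : ℕ => (G.ssigmaB n) ^ (1 / (n : ℝ))) atTop (nhds μB) ∧
      Tendsto (fun n : ℕ => (G.ssigmaFB n) ^ (1 / (n : ℝ))) atTop (nhds μFB) ∧
      μB = μFB := by
  classical
  obtain ⟨μB, hμBt, hμBle⟩ := ennreal_fekete G.ssigmaB
    (fun n => Dgraph.ssigmaB_ne_top hlf hqt n) (fun n => Dgraph.ssigmaB_one_le n)
    (fun m n => Dgraph.ssigmaB_submul hlf m n)
  obtain ⟨μF, hμFt, hμFle⟩ := ennreal_fekete G.ssigmaFB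
    (fun n => Dgraph.ssigmaFB_ne_top hlf hqt n) (fun n => Dgraph.ssigmaFB_one_le n)
    (fun m n => Dgraph.ssigmaFB_submul hlf m n)
  refine ⟨μB, μF, hμBt, hμFt, le_antisymm ?_ ?_⟩
  · -- μB ≤ μF
    have key : ∀ n : ℕ, n ≠ 0 → μB ≤ G.ssigmaFB n ^ (1/(n:ℝ)) := by
      intro n hn
      obtain ⟨M, hM⟩ := Dgraph.ssigmaB_star hlf hqt n
      set M' := max M 1 with hM'
      by_cases hF0 : G.ssigmaFB n = 0
      · have h0 : G.ssigmaB (n + M') = 0 := by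
          have h2 := hM M' (le_max_left _ _)
          rw [hF0, zero_mul] at h2
          exact le_antisymm h2 zero_le
        have h3 := hμBle (n + M') (by omega)
        rw [h0, ENNReal.zero_rpow_of_pos (by
          rw [one_div]
          exact inv_pos.2 (by exact_mod_cast (by omega : 0 < n + M')))] at h3
        exact le_trans h3 zero_le
      · by_cases hA0 : G.ssigmaB M' = 0
        · have h3 := hμBle M' (by omega)
          rw [hA0, ENNReal.zero_rpow_of_pos (by
            rw [one_div]
            exact inv_pos.2 (by exact_mod_cast (by omega : 0 < M')))] at h3
          exact le_trans h3 zero_le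
        · have hFfin : G.ssigmaFB n ≠ ⊤ := Dgraph.ssigmaFB_ne_top hlf hqt n
          have hAfin : G.ssigmaB M' ≠ ⊤ := Dgraph.ssigmaB_ne_top hlf hqt M'
          have iter : ∀ k : ℕ, G.ssigmaB (M' + k * n) ≤ (G.ssigmaFB n) ^ k * G.ssigmaB M' := by
            intro k
            induction k with
            | zero => simp
            | succ k ih =>
              have h2 : M' + (k+1) * n = n + (M' + k * n) := by ring
              rw [h2]
              calc G.ssigmaB (n + (M' + k*n))
                  ≤ G.ssigmaFB n * G.ssigmaB (M' + k*n) := hM _ (by omega)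
                _ ≤ G.ssigmaFB n * ((G.ssigmaFB n)^k * G.ssigmaB M') := mul_le_mul_right ih _
                _ = (G.ssigmaFB n)^(k+1) * G.ssigmaB M' := by ring
          have hineq : ∀ k : ℕ,
              μB ≤ ((G.ssigmaFB n) ^ k * G.ssigmaB M') ^ (1/((M' + k*n : ℕ) : ℝ)) := by
            intro k
            refine le_trans (hμBle (M' + k*n) (by omega)) ?_
            exact ENNReal.rpow_le_rpow (iter k) (by positivity)
          have hexp : ∀ k : ℕ, ((G.ssigmaFB n) ^ k * G.ssigmaB M') ^ (1/((M' + k*n : ℕ):ℝ)) =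
              (G.ssigmaFB n) ^ ((k : ℝ)/((M' + k*n : ℕ):ℝ)) *
                (G.ssigmaB M') ^ (1/((M' + k*n : ℕ):ℝ)) := by
            intro k
            rw [ENNReal.mul_rpow_of_ne_top (ENNReal.pow_ne_top hFfin) hAfin]
            congr 1
            rw [← ENNReal.rpow_natCast (G.ssigmaFB n) k, ← ENNReal.rpow_mul, mul_one_div]
          have hd1 : Tendsto (fun k : ℕ => ((k:ℝ)/((M' + k*n : ℕ):ℝ))) atTop
              (nhds (1/(n:ℝ))) := by
            have hrw2 : ∀ᶠ k : ℕ in atTop, 1/((M':ℝ)/(k:ℝ) + (n:ℝ)) =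
                (k:ℝ)/((M' + k*n : ℕ):ℝ) := by
              rw [eventually_atTop]
              refine ⟨1, fun k hk => ?_⟩
              have hk0 : (0:ℝ) < (k:ℝ) := by exact_mod_cast hk
              rw [div_add' _ _ _ (ne_of_gt hk0), one_div_div]
              congr 1
              push_cast
              ring
            apply Tendsto.congr' hrw2
            have hden : Tendsto (fun k : ℕ => (M':ℝ)/(k:ℝ) + (n:ℝ)) atTop
                (nhds ((0:ℝ) + (n:ℝ))) :=
              (tendsto_const_div_atTop_nhds_zero_nat _).add tendsto_const_nhds
            rw [zero_add] at hden
            exact (tendsto_const_nhds.div hden (by exact_mod_cast hn))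
          have hd2 : Tendsto (fun k : ℕ => (1/((M' + k*n : ℕ):ℝ))) atTop (nhds 0) := by
            simp only [one_div]
            apply Tendsto.comp tendsto_inv_atTop_zero
            apply tendsto_atTop_mono (fun k : ℕ => ?_) tendsto_natCast_atTop_atTop
            have : (k : ℕ) ≤ M' + k * n := by
              have hn1 : 1 ≤ n := by omega
              calc k ≤ k * n := Nat.le_mul_of_pos_right k (by omega)
                _ ≤ M' + k * n := by omega
            exact_mod_cast Nat.cast_le.2 this
          have hlim1 := ennreal_rpow_tendsto _ hF0 hFfin hd1
          have hlim2 := ennreal_rpow_tendsto _ hA0 hAfin hd2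
          rw [ENNReal.rpow_zero] at hlim2
          have hmul := ENNReal.Tendsto.mul hlim1 (Or.inr one_ne_top) hlim2
            (Or.inl one_ne_zero)
          have hfinal : μB ≤ (G.ssigmaFB n)^(1/(n:ℝ)) * 1 := by
            refine ge_of_tendsto hmul ?_
            refine Filter.Eventually.of_forall fun k => ?_
            rw [← hexp k]
            exact hineq k
          simpa using hfinal
    refine ge_of_tendsto hμFt ?_
    rw [eventually_atTop]
    exact ⟨1, fun n hn => key n (by omega)⟩
  · exact le_of_tendsto_of_tendsto' hμFt hμBt
      (fun n => ENNReal.rpow_le_rpow (Dgraph.ssigmaFB_le_ssigmaB hlf n) (by positivity))
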